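/- Let d ≥ e², a⃗ ∈ ℝ^k with Σ_{i=1}^k a_i = 0, and X_{a⃗} := max{e^W, e^{-W}} where W = Σ a_i log|Z_i| for independent standard Gaussians Z_i with τ² the variance of log|Z₁|. Then log log d ≤ E[ log log(d X_{a⃗}) ] ≤ log log(d/e) + 2 + log 2 + log(1 + τ‖a⃗‖₂). -/

import Mathlib

open MeasureTheory ProbabilityTheory Real Set
open scoped NNReal ENNReal

lemma aux_int_abs_rpow {b : ℝ} (hb : 0 < b) {s : ℝ} (hs : -1 < s) :
    Integrable fun x : ℝ => |x| ^ s * Real.exp (-b * x ^ 2) := by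
  have h0 : IntegrableOn (fun x : ℝ => |x| ^ s * Real.exp (-b * x ^ 2)) (Ioi 0) := by
    refine (integrableOn_rpow_mul_exp_neg_mul_sq hb hs).congr_fun (fun x hx => ?_)
      measurableSet_Ioi
    simp [abs_of_pos (mem_Ioi.mp hx)]
  have h1 : IntegrableOn (fun x : ℝ => |x| ^ s * Real.exp (-b * x ^ 2)) (Iio 0) := by
    rw [← (Measure.measurePreserving_neg (volume : Measure ℝ)).integrableOn_comp_preimage
      (Homeomorph.neg ℝ).measurableEmbedding]
    simp only [Function.comp_def, abs_neg, neg_sq, neg_preimage, neg_Iio, neg_neg, neg_zero]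
    exact h0
  rw [← integrableOn_univ, ← Iio_union_Ici (a := (0:ℝ)), integrableOn_union,
    integrableOn_Ici_iff_integrableOn_Ioi]
  exact ⟨h1, h0⟩

lemma aux_sq_log_le (x : ℝ) :
    (Real.log |x|) ^ 2 ≤ 32 * (|x| ^ (2⁻¹ : ℝ) + |x| ^ (-(2⁻¹) : ℝ)) := by
  rcases eq_or_ne x 0 with rfl | hx
  · simp
  · have ht0 : (0:ℝ) < |x| := abs_pos.mpr hx
    set t := |x| with ht
    set A := t ^ (4⁻¹ : ℝ) with hA
    set B := t ^ (-(4⁻¹) : ℝ) with hB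
    have hA0 : 0 < A := rpow_pos_of_pos ht0 _
    have hB0 : 0 < B := rpow_pos_of_pos ht0 _
    have hAB : A * B = 1 := by
      rw [hA, hB, ← rpow_add ht0]; norm_num
    have hA2 : A ^ 2 = t ^ (2⁻¹ : ℝ) := by
      rw [hA, ← rpow_natCast (t ^ (4⁻¹:ℝ)) 2, ← rpow_mul ht0.le]; norm_num
    have hB2 : B ^ 2 = t ^ (-(2⁻¹) : ℝ) := by
      rw [hB, ← rpow_natCast (t ^ (-(4⁻¹:ℝ))) 2, ← rpow_mul ht0.le]; norm_num
    have h1 : Real.log t ≤ 4 * A := by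
      have := Real.log_le_sub_one_of_pos hA0
      rw [hA, Real.log_rpow ht0] at this
      linarith
    have h2 : -Real.log t ≤ 4 * B := by
      have h := Real.log_le_sub_one_of_pos (x := t⁻¹) (by positivity)
      have htB : t⁻¹ ^ (4⁻¹:ℝ) = B := by
        rw [hB, Real.rpow_neg ht0.le, ← Real.inv_rpow ht0.le]
      have h' := Real.log_le_sub_one_of_pos (x := t⁻¹ ^ (4⁻¹:ℝ)) (by positivity)
      rw [Real.log_rpow (by positivity), Real.log_inv, htB] at h'
      nlinarith
    have habs : |Real.log t| ≤ 4 * (A + B) :=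
      abs_le.mpr ⟨by nlinarith, by nlinarith⟩
    have hsq : (Real.log t) ^ 2 ≤ (4 * (A + B)) ^ 2 := by
      rw [← sq_abs]
      exact pow_le_pow_left₀ (abs_nonneg _) habs 2
    nlinarith [sq_nonneg (A - B)]

lemma aux_memLp_log_abs_gaussian :
    MemLp (fun z : ℝ => Real.log |z|) 2 (gaussianReal 0 1) := by
  have hmeas : Measurable fun z : ℝ => Real.log |z| :=
    Real.measurable_log.comp measurable_abs
  rw [memLp_two_iff_integrable_sq hmeas.aestronglyMeasurable,
    gaussianReal_of_var_ne_zero 0 one_ne_zero,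
    integrable_withDensity_iff (measurable_gaussianPDF 0 1)
      (Filter.Eventually.of_forall fun x => ENNReal.ofReal_lt_top)]
  have hpdf : ∀ x : ℝ, (gaussianPDF 0 1 x).toReal ≤ Real.exp (-(2⁻¹:ℝ) * x ^ 2) := by
    intro x
    rw [gaussianPDF_def, ENNReal.toReal_ofReal (gaussianPDFReal_nonneg 0 1 x),
      gaussianPDFReal_def]
    beta_reduce
    have h1 : (-(x - 0) ^ 2 / (2 * ((1:ℝ≥0):ℝ))) = -(2⁻¹:ℝ) * x ^ 2 := by
      push_cast; ring
    rw [h1]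
    have h2 : (Real.sqrt (2 * π * (1:ℝ≥0)))⁻¹ ≤ 1 := by
      rw [inv_le_one_iff₀]
      right
      rw [show (1:ℝ) = Real.sqrt 1 from (Real.sqrt_one).symm]
      exact Real.sqrt_le_sqrt (by push_cast; nlinarith [Real.pi_gt_three])
    nlinarith [Real.exp_pos (-(2⁻¹:ℝ) * x ^ 2), Real.sqrt_nonneg (2 * π * (1:ℝ≥0)),
      inv_nonneg.mpr (Real.sqrt_nonneg (2 * π * (1:ℝ≥0)))]
  have hint : Integrable (fun x : ℝ =>
      32 * (|x| ^ (2⁻¹:ℝ) * Real.exp (-(2⁻¹:ℝ) * x ^ 2))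
      + 32 * (|x| ^ (-(2⁻¹):ℝ) * Real.exp (-(2⁻¹:ℝ) * x ^ 2))) := by
    exact ((aux_int_abs_rpow (by norm_num) (by norm_num)).const_mul 32).add
      ((aux_int_abs_rpow (by norm_num) (by norm_num)).const_mul 32)
  refine hint.mono' ?_ (Filter.Eventually.of_forall fun x => ?_)
  · exact ((hmeas.pow_const 2).mul
      (measurable_gaussianPDF 0 1).ennreal_toReal).aestronglyMeasurable
  · have h0 : 0 ≤ (gaussianPDF 0 1 x).toReal := ENNReal.toReal_nonneg
    have hb := aux_sq_log_le x
    have he : 0 < Real.exp (-(2⁻¹:ℝ) * x ^ 2) := Real.exp_pos _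
    have hA : (0:ℝ) ≤ |x| ^ (2⁻¹:ℝ) := Real.rpow_nonneg (abs_nonneg x) _
    have hB : (0:ℝ) ≤ |x| ^ (-(2⁻¹):ℝ) := Real.rpow_nonneg (abs_nonneg x) _
    rw [Real.norm_eq_abs, abs_mul, abs_of_nonneg h0]
    calc |Real.log |x| ^ 2| * (gaussianPDF 0 1 x).toReal
        = Real.log |x| ^ 2 * (gaussianPDF 0 1 x).toReal := by rw [abs_of_nonneg (sq_nonneg _)]
      _ ≤ 32 * (|x| ^ (2⁻¹:ℝ) + |x| ^ (-(2⁻¹):ℝ)) * Real.exp (-(2⁻¹:ℝ) * x ^ 2) := by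
          apply mul_le_mul hb (hpdf x) h0 (by positivity)
      _ = 32 * (|x| ^ (2⁻¹:ℝ) * Real.exp (-(2⁻¹:ℝ) * x ^ 2))
          + 32 * (|x| ^ (-(2⁻¹):ℝ) * Real.exp (-(2⁻¹:ℝ) * x ^ 2)) := by ring

/-- For `d ≥ e²`, `W := Σ a_i log|Z_i|` with `Z_i` i.i.d.
standard Gaussians, `Σ a_i = 0`, `τ²` the variance of `log|Z₁|`, and
`X_{a⃗} := max{e^W, e^{-W}}`, one has
`log log d ≤ E[log log(d X_{a⃗})] ≤ log log(d/e) + 2 + log 2 + log(1+τ‖a⃗‖₂)`. -/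
theorem loglog_d_expectation_linear_combination
    {Ω : Type*} [MeasureSpace Ω] [IsProbabilityMeasure (ℙ : Measure Ω)]
    (d : ℝ) (hd : Real.exp 2 ≤ d)
    (k : ℕ) (Z : Fin k → Ω → ℝ) (hZmeas : ∀ i, Measurable (Z i))
    (hZind : iIndepFun Z ℙ)
    (hZlaw : ∀ i, (ℙ : Measure Ω).map (Z i) = gaussianReal 0 1)
    (a : Fin k → ℝ) (hsum : ∑ i, a i = 0)
    (τ : ℝ) (hτ : 0 ≤ τ)
    (hτ2 : τ ^ 2
      = ProbabilityTheory.variance (fun z : ℝ => Real.log |z|) (gaussianReal 0 1)) :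
    Real.log (Real.log d)
        ≤ (∫ ω, Real.log (Real.log (d *
              max (Real.exp (∑ i, a i * Real.log |Z i ω|))
                  (Real.exp (-(∑ i, a i * Real.log |Z i ω|))))) ∂ℙ) ∧
    (∫ ω, Real.log (Real.log (d *
          max (Real.exp (∑ i, a i * Real.log |Z i ω|))
              (Real.exp (-(∑ i, a i * Real.log |Z i ω|))))) ∂ℙ)
        ≤ Real.log (Real.log (d / Real.exp 1)) + 2 + Real.log 2
            + Real.log (1 + τ * Real.sqrt (∑ i, (a i) ^ 2)) := by
  have hd0 : (0:ℝ) < d := lt_of_lt_of_le (Real.exp_pos 2) hd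
  have hld : (2:ℝ) ≤ Real.log d := by
    have := Real.log_le_log (Real.exp_pos 2) hd
    rwa [Real.log_exp] at this
  set s := τ * Real.sqrt (∑ i, (a i) ^ 2) with hs_def
  set W : Ω → ℝ := fun ω => ∑ i, a i * Real.log |Z i ω| with hWdef
  have hsum_nonneg : (0:ℝ) ≤ ∑ i, (a i) ^ 2 := Finset.sum_nonneg fun i _ => sq_nonneg _
  have hs0 : 0 ≤ s := mul_nonneg hτ (Real.sqrt_nonneg _)
  have hs2 : s ^ 2 = τ ^ 2 * ∑ i, (a i) ^ 2 := by
    rw [hs_def, mul_pow, Real.sq_sqrt hsum_nonneg]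
  set L : Fin k → Ω → ℝ := fun i ω => Real.log |Z i ω| with hLdef
  have hlogabs_meas : Measurable fun z : ℝ => Real.log |z| :=
    Real.measurable_log.comp measurable_abs
  have hmap : ∀ (i : Fin k) (f : ℝ → ℝ), Measurable f →
      ∫ ω, f (Z i ω) ∂ℙ = ∫ z, f z ∂(gaussianReal 0 1) := by
    intro i f hf
    rw [← hZlaw i, integral_map (hZmeas i).aemeasurable hf.aestronglyMeasurable]
  have hLmem : ∀ i, MemLp (L i) 2 ℙ := by
    intro i
    have h := aux_memLp_log_abs_gaussian
    rw [← hZlaw i] at h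
    exact (memLp_map_measure_iff hlogabs_meas.aestronglyMeasurable
      (hZmeas i).aemeasurable).mp h
  set X : Fin k → Ω → ℝ := fun i ω => a i * L i ω with hXdef
  have hXmem : ∀ i, MemLp (X i) 2 ℙ := fun i => (hLmem i).const_mul (a i)
  have hXint : ∀ i, Integrable (X i) ℙ := fun i => (hXmem i).integrable one_le_two
  have hWeq : W = ∑ i, X i := by
    funext ω; rw [Finset.sum_apply]
  have hWmem : MemLp W 2 ℙ := by
    rw [hWeq]; exact memLp_finset_sum' _ fun i _ => hXmem i
  have hWint : Integrable W ℙ := hWmem.integrable one_le_two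
  -- mean zero
  have hEW : ∫ ω, W ω ∂ℙ = 0 := by
    calc ∫ ω, W ω ∂ℙ = ∑ i, ∫ ω, X i ω ∂ℙ := by
          rw [hWdef]; exact integral_finset_sum _ fun i _ => hXint i
      _ = ∑ i, a i * ∫ z, Real.log |z| ∂(gaussianReal 0 1) := by
          refine Finset.sum_congr rfl fun i _ => ?_
          have : ∫ ω, X i ω ∂ℙ = ∫ ω, a i * Real.log |Z i ω| ∂ℙ := rfl
          rw [this, integral_const_mul]
          congr 1
          exact hmap i _ hlogabs_meas
      _ = (∑ i, a i) * ∫ z, Real.log |z| ∂(gaussianReal 0 1) := by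
          rw [← Finset.sum_mul]
      _ = 0 := by rw [hsum, zero_mul]
  -- variance
  have hvarL : ∀ i, variance (L i) ℙ = τ ^ 2 := by
    intro i
    rw [hτ2, variance_eq_sub (hLmem i), variance_eq_sub aux_memLp_log_abs_gaussian]
    congr 1
    · calc (ℙ : Measure Ω)[(L i) ^ 2]
          = ∫ ω, (fun z => (Real.log |z|) ^ 2) (Z i ω) ∂ℙ := by
            refine integral_congr_ae (Filter.Eventually.of_forall fun ω => ?_)
            simp [hLdef]
        _ = ∫ z, (Real.log |z|) ^ 2 ∂(gaussianReal 0 1) :=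
            hmap i _ (hlogabs_meas.pow_const 2)
        _ = (gaussianReal 0 1)[(fun z : ℝ => Real.log |z|) ^ 2] := by
            refine integral_congr_ae (Filter.Eventually.of_forall fun z => ?_)
            simp
    · congr 1
      exact hmap i _ hlogabs_meas
  have hXvar : ∀ i, variance (X i) ℙ = (a i) ^ 2 * τ ^ 2 := by
    intro i
    have : variance (X i) ℙ = variance (fun ω => a i * L i ω) ℙ := rfl
    rw [this, variance_const_mul (a i) (L i), hvarL i]
  have hvarW : variance W ℙ = τ ^ 2 * ∑ i, (a i) ^ 2 := by
    rw [hWeq, IndepFun.variance_sum (fun i _ => hXmem i) ?_]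
    · simp_rw [hXvar]
      rw [← Finset.sum_mul, mul_comm]
    · intro i _ j _ hij
      have hφ : ∀ m : Fin k, Measurable fun z : ℝ => a m * Real.log |z| :=
        fun m => hlogabs_meas.const_mul (a m)
      exact (hZind.indepFun hij).comp (hφ i) (hφ j)
  have hEW2 : ∫ ω, (W ω) ^ 2 ∂ℙ = s ^ 2 := by
    have h := variance_eq_sub hWmem
    have h2 : (ℙ : Measure Ω)[W ^ 2] = ∫ ω, (W ω) ^ 2 ∂ℙ := by
      refine integral_congr_ae (Filter.Eventually.of_forall fun ω => ?_)
      simp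
    have h3 : (ℙ : Measure Ω)[W] = 0 := hEW
    rw [h2, h3, hvarW] at h
    rw [hs2]
    linarith
  -- Jensen / Cauchy-Schwarz: E|W| ≤ s
  have habs_int : Integrable (fun ω => |W ω|) ℙ := hWint.abs
  have hsq_int : Integrable (fun ω => (W ω) ^ 2) ℙ :=
    (memLp_two_iff_integrable_sq hWmem.1).mp hWmem
  have hjensen : (∫ ω, |W ω| ∂ℙ) ^ 2 ≤ ∫ ω, (W ω) ^ 2 ∂ℙ := by
    have hconv : ConvexOn ℝ Set.univ fun x : ℝ => x ^ 2 := Even.convexOn_pow even_two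
    have hgi : Integrable ((fun x : ℝ => x ^ 2) ∘ fun ω => |W ω|) ℙ := by
      refine hsq_int.congr (Filter.Eventually.of_forall fun ω => ?_)
      simp [Function.comp, sq_abs]
    have h := hconv.map_integral_le (continuous_pow 2).continuousOn isClosed_univ
      (Filter.Eventually.of_forall fun ω => Set.mem_univ _) habs_int hgi
    calc (∫ ω, |W ω| ∂ℙ) ^ 2 ≤ ∫ ω, |W ω| ^ 2 ∂ℙ := h
      _ = ∫ ω, (W ω) ^ 2 ∂ℙ := by
          refine integral_congr_ae (Filter.Eventually.of_forall fun ω => ?_)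
          simp [sq_abs]
  have hEabsW : ∫ ω, |W ω| ∂ℙ ≤ s := by
    have hnn : 0 ≤ ∫ ω, |W ω| ∂ℙ := integral_nonneg fun ω => abs_nonneg _
    nlinarith [hjensen, hEW2]
  -- rewrite the integrand
  have hmax : ∀ w : ℝ, max (Real.exp w) (Real.exp (-w)) = Real.exp |w| := by
    intro w
    rw [abs_eq_max_neg]
    exact (Real.exp_monotone.map_max).symm
  have hgoal_eq : (∫ ω, Real.log (Real.log (d *
        max (Real.exp (∑ i, a i * Real.log |Z i ω|))
            (Real.exp (-(∑ i, a i * Real.log |Z i ω|))))) ∂ℙ)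
      = ∫ ω, Real.log (Real.log d + |W ω|) ∂ℙ := by
    refine integral_congr_ae (Filter.Eventually.of_forall fun ω => ?_)
    beta_reduce
    rw [hmax, Real.log_mul hd0.ne' (Real.exp_ne_zero _), Real.log_exp]
  -- integrability of the main integrand
  have hFmeas : AEMeasurable (fun ω => Real.log (Real.log d + |W ω|)) ℙ :=
    (Real.measurable_log.comp (measurable_abs.const_add (Real.log d))).comp_aemeasurable
      hWmem.1.aemeasurable
  have hF_int : Integrable (fun ω => Real.log (Real.log d + |W ω|)) ℙ := by
    refine ((integrable_const (Real.log d)).add hWint.abs).mono'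
      hFmeas.aestronglyMeasurable (Filter.Eventually.of_forall fun ω => ?_)
    have hw : 0 ≤ |W ω| := abs_nonneg _
    have h1 : (1:ℝ) ≤ Real.log d + |W ω| := by linarith
    rw [Real.norm_eq_abs, abs_of_nonneg (Real.log_nonneg h1)]
    exact Real.log_le_self (by linarith)
  -- lower bound
  have hlow : Real.log (Real.log d) ≤ ∫ ω, Real.log (Real.log d + |W ω|) ∂ℙ := by
    have h := integral_mono (integrable_const (Real.log (Real.log d))) hF_int
      (fun ω => Real.log_le_log (by linarith)
        (le_add_of_nonneg_right (abs_nonneg (W ω))))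
    simpa using h
  -- upper bound
  have h1s : (0:ℝ) < 1 + s := by linarith
  have hup_pt : ∀ ω, Real.log (Real.log d + |W ω|)
      ≤ (Real.log 2 + Real.log (Real.log d - 1) + Real.log (1 + s) - 1)
        + (1 + |W ω|) / (1 + s) := by
    intro ω
    have hw : 0 ≤ |W ω| := abs_nonneg _
    have hab : Real.log d + |W ω| ≤ 2 * ((Real.log d - 1) * (1 + |W ω|)) := by nlinarith
    have h2 : Real.log (Real.log d + |W ω|)
        ≤ Real.log (2 * ((Real.log d - 1) * (1 + |W ω|))) :=
      Real.log_le_log (by linarith) hab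
    rw [Real.log_mul (by norm_num)
        (ne_of_gt (mul_pos (by linarith : (0:ℝ) < Real.log d - 1)
          (by linarith : (0:ℝ) < 1 + |W ω|))),
      Real.log_mul (ne_of_gt (by linarith : (0:ℝ) < Real.log d - 1))
        (ne_of_gt (by linarith : (0:ℝ) < 1 + |W ω|))] at h2
    have h3 : Real.log (1 + |W ω|) ≤ Real.log (1 + s) + ((1 + |W ω|) / (1 + s) - 1) := by
      have hq : (0:ℝ) < (1 + |W ω|) / (1 + s) := by positivity
      have h4 := Real.log_le_sub_one_of_pos hq
      rw [Real.log_div (by positivity) h1s.ne'] at h4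
      linarith
    linarith
  have hG_int : Integrable (fun ω =>
      (Real.log 2 + Real.log (Real.log d - 1) + Real.log (1 + s) - 1)
        + (1 + |W ω|) / (1 + s)) ℙ :=
    (integrable_const _).add
      (show Integrable (fun ω => (1 + |W ω|) / (1 + s)) ℙ from
        ((integrable_const (1:ℝ)).add hWint.abs).div_const (1 + s))
  have hup : (∫ ω, Real.log (Real.log d + |W ω|) ∂ℙ)
      ≤ Real.log 2 + Real.log (Real.log d - 1) + Real.log (1 + s) := by
    have h := integral_mono hF_int hG_int hup_pt
    have hcalc : (∫ ω, ((Real.log 2 + Real.log (Real.log d - 1) + Real.log (1 + s) - 1)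
        + (1 + |W ω|) / (1 + s)) ∂ℙ)
        = (Real.log 2 + Real.log (Real.log d - 1) + Real.log (1 + s) - 1)
          + (1 + ∫ ω, |W ω| ∂ℙ) / (1 + s) := by
      rw [integral_add (integrable_const _)
        (show Integrable (fun ω => (1 + |W ω|) / (1 + s)) ℙ from
          ((integrable_const (1:ℝ)).add hWint.abs).div_const (1 + s)),
        integral_const, integral_div,
        integral_add (integrable_const (1:ℝ)) hWint.abs, integral_const]
      simp [measure_univ]
    rw [hcalc] at h
    have hfrac : (1 + ∫ ω, |W ω| ∂ℙ) / (1 + s) ≤ 1 := by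
      rw [div_le_one h1s]
      linarith
    linarith
  constructor
  · rw [hgoal_eq]; exact hlow
  · rw [hgoal_eq]
    have hlogdiv : Real.log (d / Real.exp 1) = Real.log d - 1 := by
      rw [Real.log_div hd0.ne' (Real.exp_ne_zero 1), Real.log_exp]
    rw [hlogdiv]
    linarith
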